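/- Let T be a finite set of time series, x ∈ T, B ⊆ T a nonempty subset with x ∈ B, and C ⊆ T a finite subset. Then Score₁(B ∪ C) ≤ Score₁(B) + ∑_{c ∈ C} Score₁({x, c}). -/

import Mathlib

open Finset
open scoped Classical

/-- The envelope-area score of a finite set `U` of time series over a finite domain `D`:
`Score₁(U) = ∑_{i ∈ D} (max_{t ∈ U} t(i) − min_{t ∈ U} t(i))`. -/
noncomputable def score1 {D : Type*} [Fintype D] (U : Finset (D → ℝ)) : ℝ :=
  ∑ i : D, (sSup ((fun f => f i) '' (U : Set (D → ℝ))) -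
            sInf ((fun f => f i) '' (U : Set (D → ℝ))))

lemma score1_pair {D : Type*} [Fintype D] (x c : D → ℝ) :
    score1 ({x, c} : Finset (D → ℝ)) =
      ∑ i : D, (max (x i) (c i) - min (x i) (c i)) := by
  unfold score1
  refine Finset.sum_congr rfl fun i _ => ?_
  have h : ((fun f => f i) '' (({x, c} : Finset (D → ℝ)) : Set (D → ℝ)))
      = {x i, c i} := by
    simp [Set.image_insert_eq]
  rw [h, csSup_pair, csInf_pair]

/-- For `B ⊆ T` nonempty with `x ∈ B` and `C ⊆ T`,
`Score₁(B ∪ C) ≤ Score₁(B) + ∑_{c ∈ C} Score₁({x, c})`. -/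
theorem score1_union_le {D : Type*} [Fintype D] [Nonempty D]
    (T B C : Finset (D → ℝ)) (x : D → ℝ)
    (hx : x ∈ T) (hBT : B ⊆ T) (hCT : C ⊆ T) (hxB : x ∈ B) :
    score1 (B ∪ C) ≤ score1 B + ∑ c ∈ C, score1 ({x, c} : Finset (D → ℝ)) := by
  have key : ∀ i : D,
      sSup ((fun f => f i) '' ((B ∪ C : Finset (D → ℝ)) : Set (D → ℝ))) -
        sInf ((fun f => f i) '' ((B ∪ C : Finset (D → ℝ)) : Set (D → ℝ)))
      ≤ (sSup ((fun f => f i) '' (B : Set (D → ℝ))) -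
          sInf ((fun f => f i) '' (B : Set (D → ℝ)))) +
        ∑ c ∈ C, (max (x i) (c i) - min (x i) (c i)) := by
    intro i
    set ev : (D → ℝ) → ℝ := fun f => f i with hev
    have finB : ((ev '' (B : Set (D → ℝ)))).Finite := B.finite_toSet.image ev
    have finU : ((ev '' ((B ∪ C : Finset (D → ℝ)) : Set (D → ℝ)))).Finite :=
      (B ∪ C).finite_toSet.image ev
    have neB : (ev '' (B : Set (D → ℝ))).Nonempty := ⟨ev x, ⟨x, hxB, rfl⟩⟩
    have neU : (ev '' ((B ∪ C : Finset (D → ℝ)) : Set (D → ℝ))).Nonempty :=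
      ⟨ev x, ⟨x, by simp [hxB], rfl⟩⟩
    obtain ⟨f, hf, hfval⟩ := neU.csSup_mem finU
    obtain ⟨g, hg, hgval⟩ := neU.csInf_mem finU
    have hxSB : x i ∈ ev '' (B : Set (D → ℝ)) := ⟨x, hxB, rfl⟩
    have hxle : x i ≤ sSup (ev '' (B : Set (D → ℝ))) := le_csSup finB.bddAbove hxSB
    have hlex : sInf (ev '' (B : Set (D → ℝ))) ≤ x i := csInf_le finB.bddBelow hxSB
    have hnn : ∀ c ∈ C, 0 ≤ max (x i) (c i) - min (x i) (c i) := fun c _ => by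
      have := min_le_max (a := x i) (b := c i); linarith
    have hsumnn : 0 ≤ ∑ c ∈ C, (max (x i) (c i) - min (x i) (c i)) :=
      Finset.sum_nonneg hnn
    have hterm : ∀ c : D → ℝ, c i - x i ≤ max (x i) (c i) - min (x i) (c i) :=
      fun c => by
        have h1 := le_max_right (x i) (c i)
        have h2 := min_le_left (x i) (c i)
        linarith
    have hterm' : ∀ c : D → ℝ, x i - c i ≤ max (x i) (c i) - min (x i) (c i) :=
      fun c => by
        have h1 := le_max_left (x i) (c i)
        have h2 := min_le_right (x i) (c i)
        linarith
    have hsingle : ∀ c ∈ C, max (x i) (c i) - min (x i) (c i) ≤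
        ∑ c ∈ C, (max (x i) (c i) - min (x i) (c i)) := fun c hc =>
      Finset.single_le_sum hnn hc
    set F := f with hFdef
    set G := g with hGdef
    have hFval := hfval
    have hGval := hgval
    simp only [Finset.coe_union, Set.mem_union, Finset.mem_coe] at hf hg
    have hF := hf
    have hG := hg
    have hFB : F ∈ B → F i ≤ sSup (ev '' (B : Set (D → ℝ))) := fun h =>
      le_csSup finB.bddAbove ⟨F, h, rfl⟩
    have hGB : G ∈ B → sInf (ev '' (B : Set (D → ℝ))) ≤ G i := fun h =>
      csInf_le finB.bddBelow ⟨G, h, rfl⟩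
    rw [← hFval, ← hGval]
    rcases hF with hF | hF <;> rcases hG with hG | hG
    · have h1 := hFB hF; have h2 := hGB hG; linarith
    · have h1 := hFB hF
      have h2 := hterm' G
      have h3 := hsingle G hG
      linarith
    · have h1 := hGB hG
      have h2 := hterm F
      have h3 := hsingle F hF
      linarith
    · by_cases hFG : F = G
      · subst hFG; linarith
      · have hsub : ({F, G} : Finset (D → ℝ)) ⊆ C := by
          intro y hy; simp at hy; rcases hy with rfl | rfl <;> assumption
        have hpair : ∑ c ∈ ({F, G} : Finset (D → ℝ)),
            (max (x i) (c i) - min (x i) (c i)) ≤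
            ∑ c ∈ C, (max (x i) (c i) - min (x i) (c i)) :=
          Finset.sum_le_sum_of_subset_of_nonneg hsub (fun c hc _ => hnn c hc)
        rw [Finset.sum_pair hFG] at hpair
        have h2 := hterm F
        have h3 := hterm' G
        linarith
  calc score1 (B ∪ C)
      ≤ ∑ i : D, ((sSup ((fun f => f i) '' (B : Set (D → ℝ))) -
          sInf ((fun f => f i) '' (B : Set (D → ℝ)))) +
          ∑ c ∈ C, (max (x i) (c i) - min (x i) (c i))) :=
        Finset.sum_le_sum fun i _ => key i
    _ = score1 B + ∑ i : D, ∑ c ∈ C, (max (x i) (c i) - min (x i) (c i)) := by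
        rw [Finset.sum_add_distrib]; rfl
    _ = score1 B + ∑ c ∈ C, score1 ({x, c} : Finset (D → ℝ)) := by
        rw [Finset.sum_comm]
        simp [score1_pair]
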